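/- For 0 ≤ t ≤ k and ρ = k^k/(k+1)^(k+1), the value D_t(evaluated with z^(k+1) = ρ) = sum over 0 ≤ ℓ ≤ t/k of binom(t-kℓ, ℓ)(-ρ)^ℓ equals 1; and for t > k this sum is strictly less than 1. -/

import Mathlib

open Finset

noncomputable def fD (k t : ℕ) : ℝ :=
  ∑ ℓ ∈ Finset.range (t + 1),
    ((t - k * ℓ).choose ℓ : ℝ) * (-((k : ℝ) ^ k / ((k : ℝ) + 1) ^ (k + 1))) ^ ℓ

lemma pascal_aux (k s ℓ : ℕ) :
    (s + k + 1 - k * (ℓ + 1)).choose (ℓ + 1)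
      = (s + k - k * (ℓ + 1)).choose (ℓ + 1) + (s - k * ℓ).choose ℓ := by
  have hm : k * (ℓ + 1) = k * ℓ + k := by ring
  rcases le_or_gt (k * (ℓ + 1)) (s + k) with h | h
  · have h1 : s + k + 1 - k * (ℓ + 1) = (s + k - k * (ℓ + 1)) + 1 := by omega
    have h2 : s + k - k * (ℓ + 1) = s - k * ℓ := by omega
    rw [h1, Nat.choose_succ_succ, h2, add_comm]
  · cases ℓ with
    | zero => omega
    | succ n =>
      have hm2 : k * (n + 1 + 1) = k * (n + 1) + k := by ring
      have e1 : s + k + 1 - k * (n + 1 + 1) = 0 := by omega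
      have e2 : s + k - k * (n + 1 + 1) = 0 := by omega
      have e3 : s - k * (n + 1) = 0 := by omega
      rw [e1, e2, e3]
      simp

lemma f_low (k t : ℕ) (h : t ≤ k) : fD k t = 1 := by
  rw [fD, Finset.sum_eq_single 0]
  · simp
  · intro ℓ _ hℓ
    have hℓ1 : 1 ≤ ℓ := Nat.one_le_iff_ne_zero.2 hℓ
    have : k ≤ k * ℓ := Nat.le_mul_of_pos_right k hℓ1
    have h0 : t - k * ℓ = 0 := by omega
    rw [h0, Nat.choose_eq_zero_of_lt hℓ1]
    simp
  · intro h0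
    exact absurd (Finset.mem_range.2 (by omega)) h0

lemma f_rec (k s : ℕ) (hk : 0 < k) :
    fD k (s + k + 1)
      = fD k (s + k) - (k : ℝ) ^ k / ((k : ℝ) + 1) ^ (k + 1) * fD k s := by
  set x : ℝ := -((k : ℝ) ^ k / ((k : ℝ) + 1) ^ (k + 1)) with hx
  have h1 : fD k (s + k + 1)
      = (∑ ℓ ∈ Finset.range (s + k + 1),
          ((s + k + 1 - k * (ℓ + 1)).choose (ℓ + 1) : ℝ) * x ^ (ℓ + 1)) + 1 := by
    rw [fD, Finset.sum_range_succ']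
    simp [hx]
  have key : ∀ ℓ ∈ Finset.range (s + k + 1),
      ((s + k + 1 - k * (ℓ + 1)).choose (ℓ + 1) : ℝ) * x ^ (ℓ + 1)
        = ((s + k - k * (ℓ + 1)).choose (ℓ + 1) : ℝ) * x ^ (ℓ + 1)
          + x * (((s - k * ℓ).choose ℓ : ℝ) * x ^ ℓ) := by
    intro ℓ _
    rw [pascal_aux]
    push_cast
    ring
  have hA : (∑ ℓ ∈ Finset.range (s + k + 1),
      ((s + k - k * (ℓ + 1)).choose (ℓ + 1) : ℝ) * x ^ (ℓ + 1)) = fD k (s + k) - 1 := by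
    have hlast : ((s + k - k * (s + k + 1)).choose (s + k + 1) : ℝ) * x ^ (s + k + 1) = 0 := by
      have : k * (s + k + 1) ≥ s + k + 1 := Nat.le_mul_of_pos_left _ hk
      have h0 : s + k - k * (s + k + 1) = 0 := by omega
      rw [h0, Nat.choose_eq_zero_of_lt (by omega)]
      simp
    rw [Finset.sum_range_succ, hlast, add_zero, fD, Finset.sum_range_succ']
    simp [hx]
  have hB : (∑ ℓ ∈ Finset.range (s + k + 1),
      ((s - k * ℓ).choose ℓ : ℝ) * x ^ ℓ) = fD k s := by
    rw [fD]
    refine (Finset.sum_subset ?_ ?_).symm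
    · exact Finset.range_subset_range.2 (by omega)
    · intro ℓ hℓ hℓ'
      have h1 : s + 1 ≤ ℓ := by
        simp only [Finset.mem_range] at hℓ hℓ'
        omega
      have h2 : ℓ ≤ k * ℓ := Nat.le_mul_of_pos_left _ hk
      have h0 : s - k * ℓ = 0 := by omega
      rw [h0, Nat.choose_eq_zero_of_lt (by omega)]
      simp
  rw [h1, Finset.sum_congr rfl key, Finset.sum_add_distrib, ← Finset.mul_sum, hA, hB, hx]
  ring

lemma f_pos_chain (k : ℕ) (hk : 0 < k) :
    ∀ t, 0 < fD k t ∧ ((k : ℝ) / ((k : ℝ) + 1)) * fD k t ≤ fD k (t + 1) := by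
  have hk' : (0 : ℝ) < k := by exact_mod_cast hk
  set r : ℝ := (k : ℝ) / ((k : ℝ) + 1) with hr
  have hr0 : 0 < r := div_pos hk' (by linarith)
  have hr1 : r < 1 := (div_lt_one (by linarith)).2 (by linarith)
  have hρ : (k : ℝ) ^ k / ((k : ℝ) + 1) ^ (k + 1) = (1 - r) * r ^ k := by
    rw [hr, div_pow]
    field_simp
    ring
  intro t
  induction t using Nat.strong_induction_on with
  | _ t ih =>
    rcases le_or_gt (t + 1) k with h | h
    · rw [f_low k t (by omega), f_low k (t + 1) h]
      exact ⟨one_pos, by linarith⟩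
    · obtain ⟨s, rfl⟩ : ∃ s, t = s + k := ⟨t - k, by omega⟩
      have hchain : ∀ i, i ≤ k → r ^ i * fD k s ≤ fD k (s + i) := by
        intro i hi
        induction i with
        | zero => simp
        | succ n ihn =>
          have h1 := ihn (by omega)
          have h2 := (ih (s + n) (by omega)).2
          calc r ^ (n + 1) * fD k s = r * (r ^ n * fD k s) := by ring
            _ ≤ r * fD k (s + n) := mul_le_mul_of_nonneg_left h1 hr0.le
            _ ≤ fD k (s + n + 1) := h2
      have hs := (ih s (by omega)).1
      have hck := hchain k le_rfl
      have hrk : (0 : ℝ) < r ^ k := pow_pos hr0 k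
      have hfpos : 0 < fD k (s + k) := lt_of_lt_of_le (by positivity) hck
      refine ⟨hfpos, ?_⟩
      rw [show s + k + 1 = s + k + 1 from rfl, f_rec k s hk, hρ]
      nlinarith [hck, hfpos]

lemma f_lt_one (k : ℕ) (hk : 0 < k) : ∀ t, k < t → fD k t < 1 := by
  have hk' : (0 : ℝ) < k := by exact_mod_cast hk
  have hρ : 0 < (k : ℝ) ^ k / ((k : ℝ) + 1) ^ (k + 1) := by positivity
  intro t ht
  induction t, ht using Nat.le_induction with
  | base =>
    have h := f_rec k 0 hk
    rw [show 0 + k + 1 = k + 1 from by omega, show 0 + k = k from by omega,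
      f_low k k le_rfl, f_low k 0 (by omega)] at h
    rw [h]
    linarith
  | succ n hn ihn =>
    obtain ⟨s, rfl⟩ : ∃ s, n = s + k := ⟨n - k, by omega⟩
    rw [f_rec k s hk]
    have hpos := (f_pos_chain k hk s).1
    nlinarith [mul_pos hρ hpos]

lemma f_eq (k t : ℕ) (hk : 0 < k) :
    (∑ ℓ ∈ Finset.range (t / k + 1),
      ((t - k * ℓ).choose ℓ : ℝ) * (-((k : ℝ) ^ k / ((k : ℝ) + 1) ^ (k + 1))) ^ ℓ) = fD k t := by
  rw [fD]
  refine Finset.sum_subset ?_ ?_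
  · exact Finset.range_subset_range.2 (by have := Nat.div_le_self t k; omega)
  · intro ℓ hℓ hℓ'
    simp only [Finset.mem_range] at hℓ hℓ'
    have h1 : t / k + 1 ≤ ℓ := by omega
    have h2 : t < k * (t / k + 1) := by
      have h := (Nat.div_lt_iff_lt_mul hk).1 (Nat.lt_succ_self (t / k))
      calc t < (t / k).succ * k := h
        _ = k * (t / k + 1) := by rw [Nat.succ_eq_add_one, mul_comm]
    have h3 : k * (t / k + 1) ≤ k * ℓ := Nat.mul_le_mul_left k h1
    have h0 : t - k * ℓ = 0 := by omega
    have hℓpos : 0 < ℓ := by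
      rcases Nat.eq_zero_or_pos ℓ with hz | hz
      · subst hz; simp only [Nat.mul_zero] at h3; omega
      · exact hz
    rw [h0, Nat.choose_eq_zero_of_lt hℓpos]
    simp

theorem stmt_14 (k t : ℕ) (hk : 0 < k) :
    (t ≤ k →
      (∑ ℓ ∈ Finset.range (t / k + 1),
        ((t - k * ℓ).choose ℓ : ℝ) * (-((k : ℝ) ^ k / (k + 1) ^ (k + 1))) ^ ℓ) = 1) ∧
    (k < t →
      (∑ ℓ ∈ Finset.range (t / k + 1),
        ((t - k * ℓ).choose ℓ : ℝ) * (-((k : ℝ) ^ k / (k + 1) ^ (k + 1))) ^ ℓ) < 1) := by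
  rw [f_eq k t hk]
  exact ⟨fun h => f_low k t h, fun h => f_lt_one k hk t h⟩
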